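/- Let Σ₃ = {a,b,c} and let w, w̃ ∈ Σ₃* with ι(w) = ι(w̃) = 1 < k such that |alph(α₀)| = |alph(α₁)| = 2 (hence also |alph(α̃₀)| = |alph(α̃₁)| = 2 whenever w ∼_k w̃, and the modi satisfy m(w)[1] = the letter missing from alph(α₀) and 𝔴(w)[1] = the letter missing from alph(α₁)). Assume m(w) ≠ 𝔴(w) and let y be the unique letter of Σ₃ outside {m(w)[1], 𝔴(w)[1]}. Then w ∼_k w̃ if and only if α_i ∼_{k−1} α̃_i for i ∈ {0,1} and core₁ ∼_{k−c} corẽ₁, where c := ι(α₀) + δ_{y ⪯ re(α₀)} + ι(α₁) + δ_{y ⪯ er(α₁)}. -/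

import Mathlib

open List

variable {α : Type*} [DecidableEq α] [Fintype α]

/-- Simon `k`-congruence: `u` and `v` have the same scattered factors
(subsequences) of length at most `k`. -/
def SimonCongr (k : ℕ) (u v : List α) : Prop :=
  ∀ s : List α, s.length ≤ k → (s.Sublist u ↔ s.Sublist v)

/-- `w` is `k`-universal with respect to the alphabet `S`: every word of length `k`
over `S` is a scattered factor of `w`. -/
def UniversalOn (S : Finset α) (k : ℕ) (w : List α) : Prop :=
  ∀ s : List α, s.length = k → (∀ x ∈ s, x ∈ S) → s.Sublist w

/-- The universality index of `w` w.r.t. the alphabet `S`. -/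
noncomputable def iotaOn (S : Finset α) (w : List α) : ℕ :=
  sSup {k | UniversalOn S k w}

/-- The universality index of `w` w.r.t. the full alphabet. -/
noncomputable def iotaUniv (w : List α) : ℕ := iotaOn Finset.univ w

/-- `a` is an arch w.r.t. `S`: it contains every letter of `S`, and its last letter
belongs to `S` and occurs exactly once in `a`. -/
def IsArchOn (S : Finset α) (a : List α) : Prop :=
  (∀ x ∈ S, x ∈ a) ∧ ∃ a' x, a = a' ++ [x] ∧ x ∈ S ∧ x ∉ a'

/-- `(ars, r)` is the arch factorization of `w` w.r.t. `S`. -/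
def IsArchFactOn (S : Finset α) (w : List α) (ars : List (List α)) (r : List α) : Prop :=
  w = ars.flatten ++ r ∧ (∀ a ∈ ars, IsArchOn S a) ∧ ¬ (∀ x ∈ S, x ∈ r)

/-- `(A, B)` is the α-β-factorization of `w` with `m` arches:
`αᵢ₋₁βᵢ` (for `i ∈ [m]`) together with rest `α_m` is the arch factorization of `w`, and
`(β_{m-i}α_{m-i})^R` together with rest `α₀^R` is the arch factorization of `w^R`. -/
def IsAlphaBetaFact (w : List α) (m : ℕ) (A B : ℕ → List α) : Prop :=
  IsArchFactOn Finset.univ w (List.ofFn fun i : Fin m => A i.val ++ B (i.val + 1)) (A m) ∧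
  IsArchFactOn Finset.univ w.reverse
    (List.ofFn fun i : Fin m => (B (m - i.val) ++ A (m - i.val)).reverse) ((A 0).reverse)

/-- The concatenation `αᵢ βᵢ₊₁ αᵢ₊₁ ⋯ βⱼ αⱼ`. -/
def abSeg (A B : ℕ → List α) (i j : ℕ) : List α :=
  A i ++ (((List.Ico (i + 1) (j + 1)).map fun l => B l ++ A l).flatten)

/-- The core of a `β`-factor: the factor with its first and last letter removed. -/
def coreOf (b : List α) : List α := (b.drop 1).dropLast

set_option linter.unusedSectionVars false

section Toolkit
variable {β : Type*}

lemma strip_suffix (y : β) (l : List β) :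
    ∃ l' n, l = l' ++ replicate n y ∧ l'.getLast? ≠ some y := by
  induction l using List.reverseRecOn with
  | nil => exact ⟨[], 0, by simp, by simp⟩
  | append_singleton l a ih =>
    by_cases ha : a = y
    · obtain ⟨l', n, h1, h2⟩ := ih
      exact ⟨l', n + 1, by rw [replicate_succ', ← append_assoc, ← h1, ha], h2⟩
    · exact ⟨l ++ [a], 0, by simp, by simp [getLast?_concat, ha]⟩

lemma strip_prefix (y : β) (l : List β) :
    ∃ n l', l = replicate n y ++ l' ∧ l'.head? ≠ some y := by
  induction l with
  | nil => exact ⟨0, [], by simp, by simp⟩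
  | cons a l ih =>
    by_cases ha : a = y
    · obtain ⟨n, l', h1, h2⟩ := ih
      exact ⟨n + 1, l', by rw [replicate_succ, cons_append, ← h1, ha], h2⟩
    · exact ⟨0, a :: l, by simp, by simp [ha]⟩

lemma ends_ne_sublist {x t : β} (hx : x ≠ t) {s l : List β}
    (h : s ++ [x] <+ l ++ [t]) : s ++ [x] <+ l := by
  rw [sublist_append_iff] at h
  obtain ⟨l₁, l₂, heq, h1, h2⟩ := h
  rcases sublist_singleton.1 h2 with rfl | rfl
  · rw [append_nil] at heq; exact heq ▸ h1
  · exfalso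
    have := getLast?_concat (l := s) (a := x)
    rw [heq, getLast?_concat] at this
    exact hx (Option.some.inj this).symm

lemma lastpin {t : β} {z P Q : List β} (htQ : t ∉ Q)
    (h : z ++ [t] <+ P ++ Q) : z ++ [t] <+ P := by
  rw [sublist_append_iff] at h
  obtain ⟨l₁, l₂, heq, h1, h2⟩ := h
  rcases eq_or_ne l₂ [] with rfl | hne
  · rw [append_nil] at heq; exact heq ▸ h1
  · exfalso
    have hl : l₂.getLast? = some t := by
      have h5 : (l₁ ++ l₂).getLast? = some t := by rw [← heq, getLast?_concat]
      rw [getLast?_append] at h5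
      rcases h6 : l₂.getLast? with _ | c
      · exact absurd rfl (getLast?_eq_none_iff.1 h6 ▸ hne)
      · rw [h6] at h5
        simp only [Option.some_or] at h5
        exact h5
    have : t ∈ l₂ := by
      have h3 := getLast?_eq_getLast hne
      rw [h3] at hl
      have h4 := getLast_mem hne
      rwa [show l₂.getLast hne = t by injection hl] at h4
    exact htQ (h2.subset this)

lemma headpin {m : β} {z P v : List β} (hmP : m ∉ P)
    (h : m :: z <+ P ++ (m :: v)) : z <+ v := by
  rw [sublist_append_iff] at h
  obtain ⟨l₁, l₂, heq, h1, h2⟩ := h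
  rcases l₁ with _ | ⟨c, l₁⟩
  · simp at heq
    subst heq
    exact cons_sublist_cons.1 h2
  · exfalso
    injection heq with h3 _
    exact hmP (h1.subset (h3 ▸ mem_cons_self (a := c) (l := l₁)))

lemma twopin {x z : β} {P Q : List β} (hx : x ∉ P) (hz : z ∉ Q) :
    ¬ ([x, z] <+ P ++ Q) := by
  intro h
  rw [sublist_append_iff] at h
  obtain ⟨l₁, l₂, heq, h1, h2⟩ := h
  rcases l₁ with _ | ⟨c, l₁⟩
  · simp at heq
    subst heq
    exact hz (h2.subset (by simp))
  · injection heq with h3 _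
    exact hx (h1.subset (h3 ▸ mem_cons_self (a := c) (l := l₁)))

lemma cons_ne_sublist {a b : β} {l r : List β} (h : a :: l <+ b :: r) (hab : a ≠ b) :
    a :: l <+ r := by
  rcases sublist_cons_iff.1 h with h' | ⟨r', he, _⟩
  · exact h'
  · exact absurd (by injection he) hab

lemma notmem_head_sublist {x : β} {l P Q : List β} (h : x :: l <+ P ++ Q) (hx : x ∉ P) :
    x :: l <+ Q := by
  rw [sublist_append_iff] at h
  obtain ⟨l₁, l₂, heq, h1, h2⟩ := h
  rcases l₁ with _ | ⟨c, l₁⟩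
  · rw [nil_append] at heq
    exact heq ▸ h2
  · injection heq with h3 _
    exact absurd (h1.subset (h3 ▸ mem_cons_self (a := c) (l := l₁))) hx

lemma first_occ {a : β} {l : List β} (h : a ∈ l) :
    ∃ l₁ l₂, l = l₁ ++ a :: l₂ ∧ a ∉ l₁ := by
  induction l with
  | nil => simp at h
  | cons b l ih =>
    by_cases hb : b = a
    · exact ⟨[], l, by rw [hb]; simp, by simp⟩
    · have ha : a ∈ l := by
        rcases mem_cons.1 h with h | h
        · exact absurd h.symm hb
        · exact h
      rcases ih ha with ⟨l₁, l₂, rfl, hnm⟩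
      exact ⟨b :: l₁, l₂, by simp, by
        simp only [mem_cons, not_or]
        exact ⟨fun h => hb h.symm, hnm⟩⟩

end Toolkit

section Arch
variable {β : Type*}

lemma rep_sublist_flatten {y : β} {ars : List (List β)}
    (h : ∀ a ∈ ars, y ∈ a) : replicate ars.length y <+ ars.flatten := by
  induction ars with
  | nil => simp
  | cons A rest ih =>
    rw [flatten_cons, length_cons, replicate_succ]
    have h1 : [y] <+ A := singleton_sublist.2 (h A (by simp))
    have h2 := ih (fun a ha => h a (by simp [ha]))
    simpa using h1.append h2

/-- Key absorption lemma: a short word embedded into a sequence of arches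
can be extended by one `y` per remaining arch. -/
lemma absorb {y : β} (ars : List (List β)) (T ab : List β)
    (hall : ∀ a ∈ ars, ∀ c ∈ ab, c ∈ a) (hy : ∀ a ∈ ars, y ∈ a)
    (h : ab <+ ars.flatten ++ T) (hlen : ab.length ≤ ars.length) :
    ab ++ replicate (ars.length - ab.length) y <+ ars.flatten := by
  induction ars generalizing ab T with
  | nil =>
    have : ab = [] := by
      have := length_eq_zero_iff.1 (Nat.le_antisymm (by simpa using hlen) (Nat.zero_le _))
      exact this
    simp [this]
  | cons A rest ih =>
    rcases ab with _ | ⟨x, ab'⟩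
    · simpa using rep_sublist_flatten hy
    · have hxA : x ∈ A := hall A (by simp) x (by simp)
      obtain ⟨A₁, A₂, hAeq, hxA₁⟩ := first_occ hxA
      have h2 : x :: ab' <+ A₁ ++ (x :: (A₂ ++ (rest.flatten ++ T))) := by
        rw [flatten_cons] at h
        rw [hAeq] at h
        simpa [append_assoc] using h
      have h3 : ab' <+ A₂ ++ (rest.flatten ++ T) :=
        cons_sublist_cons.1 (notmem_head_sublist h2 hxA₁)
      rw [sublist_append_iff] at h3
      obtain ⟨c, d, rfl, hc, hd⟩ := h3
      have hlen' : d.length ≤ rest.length := by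
        have : (c ++ d).length ≤ rest.length := by
          have := hlen; simp at this ⊢; omega
        simp at this; omega
      have ihd := ih T d (fun a ha cc hcc => hall a (by simp [ha]) cc (by simp [hcc]))
        (fun a ha => hy a (by simp [ha])) hd hlen'
      -- weaken exponent
      have hweak : d ++ replicate (rest.length - (c ++ d).length) y <+ rest.flatten := by
        refine Sublist.trans ?_ ihd
        refine (append_sublist_append_left d).2 ?_
        exact (replicate_sublist_replicate y).2 (by simp; omega)
      have hfin : (x :: (c ++ d)) ++ replicate (rest.length - (c++d).length) y
          <+ A ++ rest.flatten := by
        rw [hAeq]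
        have : c ++ (d ++ replicate (rest.length - (c++d).length) y) <+ A₂ ++ rest.flatten :=
          hc.append hweak
        have h5 : x :: (c ++ (d ++ replicate (rest.length - (c++d).length) y))
            <+ x :: (A₂ ++ rest.flatten) := cons_sublist_cons.2 this
        calc (x :: (c ++ d)) ++ replicate (rest.length - (c++d).length) y
            = x :: (c ++ (d ++ replicate (rest.length - (c++d).length) y)) := by
              simp [append_assoc]
          _ <+ x :: (A₂ ++ rest.flatten) := h5
          _ <+ (A₁ ++ x :: A₂) ++ rest.flatten := by
              rw [append_assoc, cons_append]
              exact sublist_append_right A₁ _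
      rw [flatten_cons]
      have hexp : (A :: rest).length - (x :: (c ++ d)).length
          = rest.length - (c ++ d).length := by simp
      rw [hexp]
      exact hfin

/-- Saturating word: embeds into the arches, but admits no further `z`. -/
lemma satur {z : β} (ars : List (List β)) (r : List β) (S : Finset β)
    (harch : ∀ a ∈ ars, ∃ a' x, a = a' ++ [x] ∧ x ∈ S ∧ x ∉ a')
    (hz : z ∉ r) :
    ∃ mo : List β, mo.length = ars.length ∧ (∀ c ∈ mo, c ∈ S) ∧
      mo <+ ars.flatten ∧ ¬ (mo ++ [z] <+ ars.flatten ++ r) := by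
  induction ars with
  | nil => exact ⟨[], by simp, by simp, by simp, by simpa using hz⟩
  | cons A rest ih =>
    obtain ⟨mo', hlen, hS, hsub, hnot⟩ := ih (fun a ha => harch a (by simp [ha]))
    obtain ⟨A', x, hAeq, hxS, hxA'⟩ := harch A (by simp)
    refine ⟨x :: mo', by simp [hlen], ?_, ?_, ?_⟩
    · intro c hc
      rcases mem_cons.1 hc with rfl | hc
      · exact hxS
      · exact hS c hc
    · rw [flatten_cons, hAeq]
      have : [x] ++ mo' <+ (A' ++ [x]) ++ rest.flatten :=
        Sublist.append (sublist_append_right A' [x]) hsub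
      simpa using this
    · intro hcon
      rw [flatten_cons, hAeq, cons_append] at hcon
      have hcon' : x :: (mo' ++ [z]) <+ (A' ++ [x]) ++ (rest.flatten ++ r) := by
        simpa [append_assoc] using hcon
      rw [sublist_append_iff] at hcon'
      obtain ⟨l₁, l₂, heq, h1, h2⟩ := hcon'
      rcases l₁ with _ | ⟨c, l₁⟩
      · rw [nil_append] at heq
        exact hnot (sublist_of_cons_sublist (heq ▸ h2))
      · injection heq with h3 h4
        subst h3
        -- l₁ must be empty since x ∉ A'
        rcases sublist_append_iff.1 h1 with ⟨m₁, m₂, heq2, hm1, hm2⟩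
        rcases sublist_singleton.1 hm2 with rfl | rfl
        · rw [append_nil] at heq2
          exact hxA' (hm1.subset (heq2 ▸ mem_cons_self (a := x) (l := l₁)))
        · rcases m₁ with _ | ⟨c', m₁⟩
          · rw [nil_append] at heq2
            injection heq2 with _ h6
            subst h6
            simp only [List.append, nil_append] at h4
            exact hnot (h4 ▸ h2)
          · injection heq2 with h5 h6
            subst h5
            exact hxA' (hm1.subset (mem_cons_self (a := x) (l := m₁)))
  
end Arch
set_option linter.unusedSectionVars false

section Iota
variable {β : Type*} [DecidableEq β]

lemma univ_of_arches {S : Finset β} : ∀ (ars : List (List β)) (s : List β),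
    (∀ a ∈ ars, ∀ x ∈ S, x ∈ a) → s.length ≤ ars.length → (∀ c ∈ s, c ∈ S) →
    s <+ ars.flatten
  | ars, [], _, _, _ => nil_sublist _
  | A :: rest, x :: s, hall, hlen, hmem => by
    have hxA : x ∈ A := hall A (by simp) x (hmem x (by simp))
    obtain ⟨A₁, A₂, hAeq, -⟩ := first_occ hxA
    have ih : s <+ rest.flatten :=
      univ_of_arches rest s (fun a ha => hall a (by simp [ha])) (by simpa using hlen)
        (fun c hc => hmem c (by simp [hc]))
    rw [flatten_cons, hAeq, append_assoc, cons_append]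
    refine Sublist.trans ?_ (sublist_append_right A₁ _)
    exact cons_sublist_cons.2 (ih.trans (sublist_append_right A₂ _))

lemma isArchFact_iotaOn {S : Finset β} {x : List β} {ars : List (List β)} {r : List β}
    (h : IsArchFactOn S x ars r) (hS : S.Nonempty) : iotaOn S x = ars.length := by
  obtain ⟨hxeq, harch, hr⟩ := h
  obtain ⟨t0, ht0⟩ := hS
  push_neg at hr
  obtain ⟨z, hzS, hzr⟩ := hr
  obtain ⟨mo, hmolen, hmoS, hmosub, hmonot⟩ :=
    satur ars r S (fun a ha => (harch a ha).2) hzr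
  have hset : {j | UniversalOn S j x} = Set.Iic ars.length := by
    ext j
    simp only [Set.mem_setOf_eq, Set.mem_Iic]
    constructor
    · intro hj
      by_contra hgt
      push_neg at hgt
      set W := mo ++ [z] ++ replicate (j - (ars.length + 1)) z with hW
      have hWlen : W.length = j := by simp [hW, hmolen]; omega
      have hWS : ∀ c ∈ W, c ∈ S := by
        intro c hc
        simp only [hW, mem_append, mem_replicate] at hc
        rcases hc with (hc | hc) | hc
        · exact hmoS c hc
        · simp at hc; subst hc; exact hzS
        · rw [hc.2]; exact hzS
      have := hj W hWlen hWS
      rw [hxeq] at this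
      exact hmonot ((sublist_append_left (mo ++ [z]) _).trans this)
    · intro hj s hslen hsS
      rw [hxeq]
      refine Sublist.trans ?_ (sublist_append_left _ r)
      exact univ_of_arches ars s (fun a ha => (harch a ha).1) (by omega) hsS
  rw [iotaOn, hset, csSup_Iic]

lemma universalOn_reverse {S : Finset β} {l : List β} {j : ℕ} :
    UniversalOn S j l.reverse ↔ UniversalOn S j l := by
  constructor <;> intro h s hlen hmem
  · have := h s.reverse (by simpa using hlen) (by simpa using hmem)
    rw [← reverse_sublist] at this
    simpa using this
  · have := h s.reverse (by simpa using hlen) (by simpa using hmem)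
    rw [← reverse_sublist] at this
    simpa using this

lemma iotaOn_reverse {S : Finset β} {l : List β} : iotaOn S l.reverse = iotaOn S l := by
  unfold iotaOn
  congr 1
  ext j
  exact universalOn_reverse

lemma constr (t y : β) (hty : t ≠ y)
    (u : List β) (S : Finset β) (ars : List (List β)) (r : List β)
    (hfact : IsArchFactOn S u ars r)
    (hSty : ∀ c ∈ S, c = t ∨ c = y) (htS : t ∈ S) (hyS : y ∈ S)
    (hut : t ∈ u) (huy : y ∈ u)
    (hletters : ∀ c ∈ u, c ∈ S) :
    1 ≤ ars.length ∧ iotaOn S u = ars.length ∧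
    (∀ ab, ab <+ u ++ [t] →
      ab ++ replicate ((ars.length + (if y ∈ r then 1 else 0)) - ab.length) y <+ u ++ [t]) ∧
    ∃ φ, φ.length = ars.length + (if y ∈ r then 1 else 0) ∧ (∀ c ∈ φ, c = t ∨ c = y) ∧
      φ <+ u ++ [t] ∧ ¬ (φ ++ [y] <+ u ++ [t]) := by
  obtain ⟨hueq, harch, hr⟩ := hfact
  have hUeq : u ++ [t] = ars.flatten ++ (r ++ [t]) := by rw [hueq, append_assoc]
  have hn1 : 1 ≤ ars.length := by
    rcases ars with _ | ⟨A, rest⟩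
    · exfalso
      apply hr
      intro c hc
      rcases hSty c hc with rfl | rfl
      · rwa [hueq, flatten_nil, nil_append] at hut
      · rwa [hueq, flatten_nil, nil_append] at huy
    · simp
  refine ⟨hn1, isArchFact_iotaOn ⟨hueq, harch, hr⟩ ⟨t, htS⟩, ?_, ?_⟩
  · intro ab hab
    set eu := ars.length + (if y ∈ r then 1 else 0) with heu
    rcases Nat.lt_or_ge ab.length eu with hlt | hge
    · have hlen : ab.length ≤ ars.length := by
        rcases (em (y ∈ r)) with hy | hy <;> simp [hy] at heu <;> omega
      have habS : ∀ c ∈ ab, c ∈ S := by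
        intro c hc
        rcases mem_append.1 (hab.subset hc) with h | h
        · exact hletters c h
        · rw [mem_singleton.1 h]; exact htS
      have habs := absorb (y := y) ars (r ++ [t]) ab
        (fun a ha c hc => (harch a ha).1 c (habS c hc))
        (fun a ha => (harch a ha).1 y hyS) (hUeq ▸ hab) hlen
      by_cases hy : y ∈ r
      · have he : eu - ab.length = (ars.length - ab.length) + 1 := by
          simp only [heu, if_pos hy]; omega
        rw [he, replicate_succ', ← append_assoc]
        have s1 : (ab ++ replicate (ars.length - ab.length) y) ++ [y]
            <+ ars.flatten ++ [y] := habs.append (Sublist.refl [y])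
        have s2 : ars.flatten ++ [y] <+ ars.flatten ++ r :=
          (append_sublist_append_left _).2 (singleton_sublist.2 hy)
        have s3 : ars.flatten ++ r <+ (ars.flatten ++ r) ++ [t] := sublist_append_left _ _
        rw [hueq]
        exact (s1.trans s2).trans s3
      · have he : eu - ab.length = ars.length - ab.length := by
          simp only [heu, if_neg hy]
          omega
        rw [he]
        refine habs.trans ?_
        rw [hUeq]
        exact sublist_append_left _ _
    · rw [Nat.sub_eq_zero_of_le hge, replicate_zero, append_nil]
      exact hab
  · by_cases hy : y ∈ r
    · have htr : t ∉ r := by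
        by_contra htr
        apply hr
        intro c hc
        rcases hSty c hc with rfl | rfl
        · exact htr
        · exact hy
      obtain ⟨mo, hmolen, hmoS, hmosub, hmonot⟩ :=
        satur (z := y) (ars ++ [r ++ [t]]) [] S
          (by
            intro a ha
            rcases mem_append.1 ha with ha | ha
            · exact (harch a ha).2
            · rw [mem_singleton.1 ha]
              exact ⟨r, t, rfl, htS, htr⟩)
          (by simp)
      have hflat : (ars ++ [r ++ [t]]).flatten = u ++ [t] := by
        rw [flatten_append, hUeq]
        simp
      refine ⟨mo, ?_, fun c hc => hSty c (hmoS c hc), ?_, ?_⟩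
      · rw [hmolen]; simp [hy]
      · rwa [hflat] at hmosub
      · rw [← hflat]
        intro hcon
        exact hmonot (by simpa using hcon)
    · obtain ⟨mo, hmolen, hmoS, hmosub, hmonot⟩ :=
        satur (z := y) ars (r ++ [t]) S (fun a ha => (harch a ha).2)
          (by simp [hy, Ne.symm hty])
      refine ⟨mo, by rw [hmolen]; simp [hy], fun c hc => hSty c (hmoS c hc), ?_, ?_⟩
      · rw [hUeq]
        exact hmosub.trans (sublist_append_left _ _)
      · rw [hUeq]
        intro hcon
        exact hmonot hcon
  
end Iota

section Pin
variable {β : Type*}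

lemma mem_take_head {a : β} {l : List β} {n : ℕ} (h : 0 < n) : a ∈ take n (a :: l) := by
  rcases n with _ | n
  · omega
  · rw [take_succ_cons]; simp

lemma t1_transfer {t : β} {u₁ u₂ ab : List β} {K : ℕ}
    (cu : SimonCongr K u₁ u₂) (hab : ab <+ u₁ ++ [t])
    (hform : ab = [] ∨ ab.getLast? = some t) (hlen : ab.length ≤ K + 1) :
    ab <+ u₂ ++ [t] := by
  rcases hform with rfl | hform
  · exact nil_sublist _
  · have hne : ab ≠ [] := by
      intro h; rw [h] at hform; simp at hform
    have hlast : ab.getLast hne = t := by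
      have := getLast?_eq_getLast hne
      rw [hform] at this
      exact (Option.some.inj this).symm
    have heq : ab = ab.dropLast ++ [t] := by
      conv_lhs => rw [← dropLast_append_getLast hne]
      rw [hlast]
    rw [heq] at hab ⊢
    have h1 : ab.dropLast <+ u₁ := (append_sublist_append_right [t]).1 hab
    have h2 : ab.dropLast.length ≤ K := by
      have h4 : ab.length ≤ K + 1 := hlen
      have := length_dropLast (xs := ab)
      rcases ab with _ | ⟨c, l⟩
      · simp
      · simp at this ⊢
        simp at h4
        omega
    exact (append_sublist_append_right [t]).2 ((cu _ h2).1 h1)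

lemma t2_transfer {m : β} {v₁ v₂ bb : List β} {K : ℕ}
    (cv : SimonCongr K v₁ v₂) (hbb : bb <+ m :: v₁)
    (hform : bb = [] ∨ bb.head? = some m) (hlen : bb.length ≤ K + 1) :
    bb <+ m :: v₂ := by
  rcases hform with rfl | hform
  · exact nil_sublist _
  · rcases bb with _ | ⟨c, tl⟩
    · exact nil_sublist _
    · have hc : c = m := by
        have : some c = some m := hform
        exact Option.some.inj this
      subst hc
      have h1 : tl <+ v₁ := cons_sublist_cons.1 hbb
      have h2 : tl.length ≤ K := by simp at hlen; omega
      exact cons_sublist_cons.2 ((cv _ h2).1 h1)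

/-- The big pinning lemma: an over-padded middle block cannot embed. -/
lemma bigpin {t m y : β} (hmy : m ≠ y) (hty : t ≠ y)
    {U V φ ψ : List β} {P : ℕ}
    (hφl : ∀ c ∈ φ, c = t ∨ c = y) (hψl : ∀ c ∈ ψ, c = m ∨ c = y)
    (hmU : m ∉ U) (htV : t ∉ V)
    (N1 : ¬ (φ ++ [y] <+ U)) (N2 : ¬ (y :: ψ <+ V)) :
    ¬ (φ ++ replicate (P+1) y ++ ψ <+ U ++ replicate P y ++ V) := by
  intro h
  obtain ⟨phat, a, hphi, hplast⟩ := strip_suffix y φ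
  obtain ⟨b, psihat, hpsi, hphead⟩ := strip_prefix y ψ
  have hphatform : phat = [] ∨ ∃ φ₂, phat = φ₂ ++ [t] := by
    rcases eq_or_ne phat [] with rfl | hne
    · exact Or.inl rfl
    · refine Or.inr ⟨phat.dropLast, ?_⟩
      have hmem : phat.getLast hne ∈ φ := by
        rw [hphi]
        exact mem_append_left _ (getLast_mem hne)
      rcases hφl _ hmem with hl | hl
      · conv_lhs => rw [← dropLast_append_getLast hne]
        rw [hl]
      · exact absurd (by rw [← hl]; exact (getLast?_eq_getLast hne)) hplast
  have hpsihatform : psihat = [] ∨ ∃ ψ₂, psihat = m :: ψ₂ := by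
    rcases psihat with _ | ⟨c, ψ₂⟩
    · exact Or.inl rfl
    · refine Or.inr ⟨ψ₂, ?_⟩
      have hmem : c ∈ ψ := by
        rw [hpsi]; exact mem_append_right _ (by simp)
      rcases hψl _ hmem with hl | hl
      · rw [hl]
      · exact absurd (by rw [← hl]; rfl) hphead
  have hSeq : φ ++ replicate (P+1) y ++ ψ
      = phat ++ replicate (a + (P+1) + b) y ++ psihat := by
    rw [hphi, hpsi]
    simp [replicate_add, append_assoc]
  rw [hSeq] at h
  set Y := a + (P+1) + b with hY
  rw [show U ++ replicate P y ++ V = (U ++ replicate P y) ++ V from rfl,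
    sublist_append_iff] at h
  obtain ⟨AB, Bl, hS1, hAB, hBl⟩ := h
  rw [sublist_append_iff] at hAB
  obtain ⟨A, mid, hS2, hA, hmid⟩ := hAB
  obtain ⟨j, hjP, hmideq⟩ := sublist_replicate_iff.1 hmid
  subst hmideq
  subst hS2
  have E : (A ++ replicate j y) ++ Bl = phat ++ replicate Y y ++ psihat := hS1.symm
  have hmA : m ∉ A := fun hc => hmU (hA.subset hc)
  have htBl : t ∉ Bl := fun hc => htV (hBl.subset hc)
  have hlenS : A.length + j + Bl.length = phat.length + Y + psihat.length := by
    have := congrArg List.length E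
    simp at this
    omega
  -- Step 1
  have step1 : phat.length ≤ A.length := by
    rcases hphatform with rfl | ⟨φ₂, hp2⟩
    · simp
    · by_contra hcon
      push_neg at hcon
      have hA2 : A.length ≤ φ₂.length := by
        rw [hp2] at hcon; simp at hcon; omega
      have hdropL : drop A.length ((A ++ replicate j y) ++ Bl)
          = replicate j y ++ Bl := by
        rw [append_assoc, drop_left]
      have hdropR : t ∈ drop A.length (phat ++ replicate Y y ++ psihat) := by
        rw [hp2, append_assoc, append_assoc, drop_append]
        refine mem_append_right _ ?_
        rw [Nat.sub_eq_zero_of_le hA2, drop_zero]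
        simp
      rw [← E, hdropL] at hdropR
      rcases mem_append.1 hdropR with hc | hc
      · exact hty (eq_of_mem_replicate hc)
      · exact htBl hc
  -- Step 2
  have step2 : A.length ≤ phat.length + Y := by
    by_contra hcon
    push_neg at hcon
    have hpsine : ∃ ψ₂, psihat = m :: ψ₂ := by
      rcases hpsihatform with rfl | h2
      · exfalso; simp at hlenS; omega
      · exact h2
    obtain ⟨ψ₂, hps2⟩ := hpsine
    have hAtake : A = take A.length (phat ++ replicate Y y ++ psihat) := by
      rw [← E, append_assoc, take_left]
    have hmemA : m ∈ A := by
      rw [hAtake, hps2, take_append,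
        take_of_length_le (by simp; omega)]
      refine mem_append_right _ ?_
      exact mem_take_head (by simp; omega)
    exact hmA hmemA
  -- Step 3
  have hxY : A.length - phat.length ≤ Y := by omega
  have hAform : A = phat ++ replicate (A.length - phat.length) y := by
    have hAtake : A = take A.length (phat ++ (replicate Y y ++ psihat)) := by
      rw [← append_assoc, ← E, append_assoc, take_left]
    conv_lhs => rw [hAtake]
    rw [take_append, take_of_length_le step1,
      take_append, take_replicate, length_replicate,
      Nat.sub_eq_zero_of_le hxY, take_zero, append_nil, min_eq_left hxY]
  -- Step 4
  have hxa : A.length - phat.length ≤ a := by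
    by_contra hcon
    push_neg at hcon
    apply N1
    have h1 : φ ++ [y] = phat ++ replicate (a+1) y := by
      rw [hphi, replicate_succ', ← append_assoc]
    rw [h1]
    refine Sublist.trans ?_ (hAform ▸ hA)
    exact (append_sublist_append_left phat).2
      ((replicate_sublist_replicate y).2 (by omega))
  -- Step 5
  have step5 : A.length + j ≤ phat.length + Y := by
    by_contra hcon
    push_neg at hcon
    have hpsine : ∃ ψ₂, psihat = m :: ψ₂ := by
      rcases hpsihatform with rfl | h2
      · exfalso; simp at hlenS; omega
      · exact h2
    obtain ⟨ψ₂, hps2⟩ := hpsine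
    have htake : A ++ replicate j y = take (A.length + j) (phat ++ replicate Y y ++ psihat) := by
      rw [← E, take_left' (by simp)]
    have hmemA : m ∈ A ++ replicate j y := by
      rw [htake, hps2, take_append,
        take_of_length_le (by simp; omega)]
      refine mem_append_right _ ?_
      exact mem_take_head (by simp; omega)
    rcases mem_append.1 hmemA with hc | hc
    · exact hmA hc
    · exact hmy (eq_of_mem_replicate hc)
  -- Step 6
  have hBlform : Bl = replicate (phat.length + Y - (A.length + j)) y ++ psihat := by
    have hdrop : Bl = drop (A.length + j) (phat ++ (replicate Y y ++ psihat)) := by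
      rw [← append_assoc, ← E, drop_left' (by simp)]
    rw [hdrop, drop_append, drop_of_length_le (by omega : phat.length ≤ A.length + j),
      nil_append, drop_append, drop_replicate, length_replicate,
      show A.length + j - phat.length - Y = 0 from by omega, drop_zero]
    congr 2
    omega
  -- Step 7
  have hzb : phat.length + Y - (A.length + j) ≤ b := by
    by_contra hcon
    push_neg at hcon
    apply N2
    have h1 : y :: ψ = replicate (b+1) y ++ psihat := by
      rw [hpsi, replicate_succ, cons_append]
    rw [h1]
    refine Sublist.trans ?_ (hBlform ▸ hBl)
    exact (append_sublist_append_right psihat).2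
      ((replicate_sublist_replicate y).2 (by omega))
  -- Step 8 : contradiction
  have hBllen : Bl.length = (phat.length + Y - (A.length + j)) + psihat.length := by
    rw [hBlform]; simp
  omega

end Pin

section Variants
variable {β : Type*}

lemma simonCongr_symm {K : ℕ} {u v : List β} (h : SimonCongr K u v) : SimonCongr K v u :=
  fun s hs => (h s hs).symm

lemma split_word {y : β} {s U V : List β} {P : ℕ}
    (h : s <+ U ++ replicate P y ++ V) :
    ∃ a₁ j b₁, s = a₁ ++ replicate j y ++ b₁ ∧ a₁ <+ U ∧ j ≤ P ∧ b₁ <+ V := by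
  rw [show U ++ replicate P y ++ V = (U ++ replicate P y) ++ V from rfl,
    sublist_append_iff] at h
  obtain ⟨ab, b₁, rfl, hab, hb⟩ := h
  rw [sublist_append_iff] at hab
  obtain ⟨a₁, mid, rfl, ha, hmid⟩ := hab
  obtain ⟨j, hj, rfl⟩ := sublist_replicate_iff.1 hmid
  exact ⟨a₁, j, b₁, rfl, ha, hj, hb⟩

lemma join_word {y : β} {a₁ b₁ U V : List β} {j P : ℕ}
    (ha : a₁ <+ U) (hj : j ≤ P) (hb : b₁ <+ V) :
    a₁ ++ replicate j y ++ b₁ <+ U ++ replicate P y ++ V :=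
  (ha.append ((replicate_sublist_replicate y).2 hj)).append hb

lemma strip_split {y : β} {a₁ b₁ : List β} (j : ℕ) :
    ∃ ab M bb, a₁ ++ replicate j y ++ b₁ = ab ++ replicate M y ++ bb ∧
      ab.getLast? ≠ some y ∧ bb.head? ≠ some y ∧ ab <+ a₁ ∧ bb <+ b₁ ∧
      ab.length + M + bb.length = a₁.length + j + b₁.length := by
  obtain ⟨ab, aa, ha, hal⟩ := strip_suffix y a₁
  obtain ⟨cc, bb, hb, hbh⟩ := strip_prefix y b₁
  refine ⟨ab, aa + j + cc, bb, ?_, hal, hbh, ?_, ?_, ?_⟩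
  · rw [ha, hb, replicate_add, replicate_add]
    simp only [append_assoc]
  · rw [ha]; exact sublist_append_left _ _
  · rw [hb]; exact sublist_append_right _ _
  · rw [ha, hb]; simp only [length_append, length_replicate]; omega

lemma form_last {t y : β} {u ab : List β} (hlet : ∀ c ∈ u, c = t ∨ c = y)
    (hab : ab <+ u ++ [t]) (hlast : ab.getLast? ≠ some y) :
    ab = [] ∨ ab.getLast? = some t := by
  rcases eq_or_ne ab [] with rfl | hne
  · exact Or.inl rfl
  · right
    have hmem : ab.getLast hne ∈ u ++ [t] := hab.subset (getLast_mem hne)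
    have hgl := getLast?_eq_getLast hne
    rcases mem_append.1 hmem with hmem | hmem
    · rcases hlet _ hmem with hl | hl
      · rw [hgl, hl]
      · exact absurd (by rw [hgl, hl]) hlast
    · rw [hgl, mem_singleton.1 hmem]
  
lemma form_head {m y : β} {v bb : List β} (hlet : ∀ c ∈ v, c = m ∨ c = y)
    (hbb : bb <+ m :: v) (hhead : bb.head? ≠ some y) :
    bb = [] ∨ bb.head? = some m := by
  rcases bb with _ | ⟨c, tl⟩
  · exact Or.inl rfl
  · right
    have hmem : c ∈ m :: v := hbb.subset (by simp)
    rcases mem_cons.1 hmem with rfl | hmem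
    · rfl
    · rcases hlet _ hmem with rfl | rfl
      · rfl
      · exact absurd rfl hhead

lemma ext_left {t y : β} (hty : t ≠ y) {u₁ u₂ ab : List β} {K eu x : ℕ}
    (cu : SimonCongr K u₁ u₂)
    (L2 : ∀ z, z <+ u₁ ++ [t] → z ++ replicate (eu - z.length) y <+ u₁ ++ [t])
    (hab : ab <+ u₁ ++ [t]) (hform : ab = [] ∨ ab.getLast? = some t)
    (hxe : x ≤ eu - ab.length) (hxk : x = 0 ∨ x + ab.length ≤ K)
    (habk : ab.length ≤ K + 1) :
    ab ++ replicate x y <+ u₂ ++ [t] := by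
  rcases Nat.eq_zero_or_pos x with rfl | hxpos
  · rw [replicate_zero, append_nil]
    exact t1_transfer cu hab hform habk
  · have h1 : ab ++ replicate x y <+ u₁ ++ [t] := by
      refine Sublist.trans ?_ (L2 ab hab)
      exact (append_sublist_append_left ab).2 ((replicate_sublist_replicate y).2 hxe)
    have heq : ab ++ replicate x y = (ab ++ replicate (x-1) y) ++ [y] := by
      rw [append_assoc, ← replicate_succ']
      congr 2
      omega
    rw [heq] at h1
    have h2 : (ab ++ replicate (x-1) y) ++ [y] <+ u₁ := ends_ne_sublist (Ne.symm hty) h1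
    have h3 : ((ab ++ replicate (x-1) y) ++ [y]).length ≤ K := by
      simp
      omega
    have h4 := (cu _ h3).1 h2
    rw [heq]
    exact h4.trans (sublist_append_left _ _)

lemma ext_right {m y : β} (hmy : m ≠ y) {v₁ v₂ bb : List β} {K ev z : ℕ}
    (cv : SimonCongr K v₁ v₂)
    (L2 : ∀ w, w <+ m :: v₁ → replicate (ev - w.length) y ++ w <+ m :: v₁)
    (hbb : bb <+ m :: v₁) (hform : bb = [] ∨ bb.head? = some m)
    (hze : z ≤ ev - bb.length) (hzk : z = 0 ∨ z + bb.length ≤ K)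
    (hbbk : bb.length ≤ K + 1) :
    replicate z y ++ bb <+ m :: v₂ := by
  rcases Nat.eq_zero_or_pos z with rfl | hzpos
  · rw [replicate_zero, nil_append]
    exact t2_transfer cv hbb hform hbbk
  · have h1 : replicate z y ++ bb <+ m :: v₁ := by
      refine Sublist.trans ?_ (L2 bb hbb)
      exact (append_sublist_append_right bb).2 ((replicate_sublist_replicate y).2 hze)
    have heq : replicate z y ++ bb = y :: (replicate (z-1) y ++ bb) := by
      conv_lhs => rw [show z = (z-1) + 1 from by omega]
      rw [replicate_succ, cons_append]
    rw [heq] at h1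
    have h2 : y :: (replicate (z-1) y ++ bb) <+ v₁ := cons_ne_sublist h1 (Ne.symm hmy)
    have h3 : (y :: (replicate (z-1) y ++ bb)).length ≤ K := by
      simp
      omega
    have h4 := (cv _ h3).1 h2
    rw [heq]
    exact h4.cons m

/-- Variant A : source-side absorption with length caps. -/
lemma transfer_ge {t m y : β} (hmy : m ≠ y) (hty : t ≠ y)
    {u₁ v₁ u₂ v₂ : List β} {K P Q eu ev : ℕ}
    (cu : SimonCongr K u₁ u₂) (cv : SimonCongr K v₁ v₂)
    (hlu : ∀ c ∈ u₁, c = t ∨ c = y) (hlv : ∀ c ∈ v₁, c = m ∨ c = y)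
    (L2u : ∀ z, z <+ u₁ ++ [t] → z ++ replicate (eu - z.length) y <+ u₁ ++ [t])
    (L2v : ∀ w, w <+ m :: v₁ → replicate (ev - w.length) y ++ w <+ m :: v₁)
    (heu : 1 ≤ eu) (hev : 1 ≤ ev) (hK : 1 ≤ K) (hq : K + 1 ≤ Q + eu + ev)
    {s : List β} (hs : s.length ≤ K + 1)
    (h : s <+ (u₁ ++ [t]) ++ replicate P y ++ (m :: v₁)) :
    s <+ (u₂ ++ [t]) ++ replicate Q y ++ (m :: v₂) := by
  obtain ⟨a₁, j, b₁, rfl, ha, hj, hb⟩ := split_word h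
  obtain ⟨ab, M, bb, hseq, hal, hbh, habs, hbbs, hlen⟩ :=
    strip_split (y := y) (a₁ := a₁) (b₁ := b₁) j
  rw [hseq]
  have hab : ab <+ u₁ ++ [t] := habs.trans ha
  have hbb : bb <+ m :: v₁ := hbbs.trans hb
  have hformA := form_last hlu hab hal
  have hformB := form_head hlv hbb hbh
  have hs' : a₁.length + j + b₁.length ≤ K + 1 := by
    have h9 := hs
    simp only [length_append, length_replicate] at h9
    omega
  have hslen : ab.length + M + bb.length ≤ K + 1 := by omega
  set x := min M (min (eu - ab.length) (K - ab.length)) with hx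
  set z := min (M - x) (min (ev - bb.length) (K - bb.length)) with hz
  have F1 : ab ++ replicate x y <+ u₂ ++ [t] :=
    ext_left hty cu L2u hab hformA (by omega) (by omega) (by omega)
  have F2 : replicate z y ++ bb <+ m :: v₂ :=
    ext_right hmy cv L2v hbb hformB (by omega) (by omega) (by omega)
  obtain ⟨mid, hmiddef⟩ : ∃ mid, mid = M - x - z := ⟨_, rfl⟩
  have hMeq : M = x + mid + z := by omega
  have heq2 : ab ++ replicate M y ++ bb
      = (ab ++ replicate x y) ++ replicate mid y ++ (replicate z y ++ bb) := by
    conv_lhs => rw [hMeq]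
    rw [replicate_add, replicate_add]
    simp only [append_assoc]
  rw [heq2]
  exact join_word F1 (by omega) F2

/-- Variant B : target-side absorption, no length caps. -/
lemma transfer_ge_rev {t m y : β} (hmy : m ≠ y) (hty : t ≠ y)
    {u₁ v₁ u₂ v₂ : List β} {K P Q eu ev : ℕ}
    (cu : SimonCongr K u₂ u₁) (cv : SimonCongr K v₂ v₁)
    (hlu : ∀ c ∈ u₂, c = t ∨ c = y) (hlv : ∀ c ∈ v₂, c = m ∨ c = y)
    (L2u : ∀ z, z <+ u₁ ++ [t] → z ++ replicate (eu - z.length) y <+ u₁ ++ [t])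
    (L2v : ∀ w, w <+ m :: v₁ → replicate (ev - w.length) y ++ w <+ m :: v₁)
    (hp : K + 1 ≤ P + eu + ev)
    {s : List β} (hs : s.length ≤ K + 1)
    (h : s <+ (u₂ ++ [t]) ++ replicate Q y ++ (m :: v₂)) :
    s <+ (u₁ ++ [t]) ++ replicate P y ++ (m :: v₁) := by
  obtain ⟨a₁, j, b₁, rfl, ha, hj, hb⟩ := split_word h
  obtain ⟨ab, M, bb, hseq, hal, hbh, habs, hbbs, hlen⟩ :=
    strip_split (y := y) (a₁ := a₁) (b₁ := b₁) j
  rw [hseq]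
  have hab2 : ab <+ u₂ ++ [t] := habs.trans ha
  have hbb2 : bb <+ m :: v₂ := hbbs.trans hb
  have hformA := form_last hlu hab2 hal
  have hformB := form_head hlv hbb2 hbh
  have hs' : a₁.length + j + b₁.length ≤ K + 1 := by
    have h9 := hs
    simp only [length_append, length_replicate] at h9
    omega
  have hslen : ab.length + M + bb.length ≤ K + 1 := by omega
  have hab : ab <+ u₁ ++ [t] := t1_transfer cu hab2 hformA (by omega)
  have hbb : bb <+ m :: v₁ := t2_transfer cv hbb2 hformB (by omega)
  set x := min M (eu - ab.length) with hx
  set z := min (M - x) (ev - bb.length) with hz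
  have F1 : ab ++ replicate x y <+ u₁ ++ [t] := by
    refine Sublist.trans ?_ (L2u ab hab)
    exact (append_sublist_append_left ab).2 ((replicate_sublist_replicate y).2 (by omega))
  have F2 : replicate z y ++ bb <+ m :: v₁ := by
    refine Sublist.trans ?_ (L2v bb hbb)
    exact (append_sublist_append_right bb).2 ((replicate_sublist_replicate y).2 (by omega))
  obtain ⟨mid, hmiddef⟩ : ∃ mid, mid = M - x - z := ⟨_, rfl⟩
  have hMeq : M = x + mid + z := by omega
  have heq2 : ab ++ replicate M y ++ bb
      = (ab ++ replicate x y) ++ replicate mid y ++ (replicate z y ++ bb) := by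
    conv_lhs => rw [hMeq]
    rw [replicate_add, replicate_add]
    simp only [append_assoc]
  rw [heq2]
  exact join_word F1 (by omega) F2

/-- Variant C : equal pad sizes. -/
lemma transfer_eq {t m y : β} {u₁ v₁ u₂ v₂ : List β} {K P : ℕ}
    (cu : SimonCongr K u₁ u₂) (cv : SimonCongr K v₁ v₂)
    (hlu : ∀ c ∈ u₁, c = t ∨ c = y) (hlv : ∀ c ∈ v₁, c = m ∨ c = y)
    (hyu2 : y ∈ u₂) (hyv2 : y ∈ v₂)
    {s : List β} (hs : s.length ≤ K + 1)
    (h : s <+ (u₁ ++ [t]) ++ replicate P y ++ (m :: v₁)) :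
    s <+ (u₂ ++ [t]) ++ replicate P y ++ (m :: v₂) := by
  obtain ⟨a₁, j, b₁, rfl, ha, hj, hb⟩ := split_word h
  have hlens : a₁.length + j + b₁.length ≤ K + 1 := by
    have h9 := hs
    simp only [length_append, length_replicate] at h9
    omega
  -- decompose a₁
  rcases Nat.lt_or_ge a₁.length (K + 1) with haK | haK
  · rcases Nat.lt_or_ge b₁.length (K + 1) with hbK | hbK
    · -- generic case
      have ha2 : a₁ <+ u₂ ++ [t] := by
        rcases sublist_append_iff.1 ha with ⟨x₁, x₂, rfl, hx1, hx2⟩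
        rcases sublist_singleton.1 hx2 with rfl | rfl
        · rw [append_nil] at *
          have := (cu x₁ (by omega)).1 hx1
          exact this.trans (sublist_append_left _ _)
        · have hx1len : x₁.length ≤ K := by
            simp at hlens haK ⊢
            omega
          exact (append_sublist_append_right [t]).2 ((cu x₁ hx1len).1 hx1)
      have hb2 : b₁ <+ m :: v₂ := by
        rcases sublist_cons_iff.1 hb with hb' | ⟨r, rfl, hr⟩
        · exact ((cv b₁ (by omega)).1 hb').cons m
        · have hrlen : r.length ≤ K := by
            simp at hbK
            omega
          exact ((cv r hrlen).1 hr).cons₂ m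
      exact join_word ha2 hj hb2
    · -- b₁ is everything
      have hb1len : b₁.length = K + 1 := by omega
      have ha0 : a₁ = [] := by
        have := length_eq_zero_iff.1 (show a₁.length = 0 by omega)
        exact this
      have hj0 : j = 0 := by omega
      subst ha0 hj0
      rcases sublist_cons_iff.1 hb with hb' | ⟨r, rfl, hr⟩
      · -- b₁ <+ v₁, full length
        rcases b₁ with _ | ⟨hd, tl⟩
        · simp at hb1len
        · have htl : tl <+ v₁ := (tail_sublist _).trans hb'
          have htlen : tl.length ≤ K := by simp at hb1len; omega
          have htl2 := (cv tl htlen).1 htl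
          have hhd : hd ∈ v₁ := hb'.subset (by simp)
          rcases hlv _ hhd with rfl | rfl
          · -- hd = m
            refine join_word (nil_sublist _) (Nat.zero_le _) ?_
            exact htl2.cons₂ hd
          · -- hd = y
            have h1 : [hd] <+ u₂ ++ [t] :=
              (singleton_sublist.2 hyu2).trans (sublist_append_left _ _)
            have h2 : tl <+ m :: v₂ := htl2.cons m
            have := join_word (y := hd) (P := P) h1 (Nat.zero_le P) h2
            simpa using this
      · -- b₁ = m :: r
        have hrlen : r.length ≤ K := by simp at hb1len; omega
        exact join_word (nil_sublist _) (Nat.zero_le _) (((cv r hrlen).1 hr).cons₂ m)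
  · -- a₁ is everything
    have ha1len : a₁.length = K + 1 := by omega
    have hb0 : b₁ = [] := length_eq_zero_iff.1 (by omega)
    have hj0 : j = 0 := by omega
    subst hb0 hj0
    rcases sublist_append_iff.1 ha with ⟨x₁, x₂, rfl, hx1, hx2⟩
    rcases sublist_singleton.1 hx2 with rfl | rfl
    · -- a₁ = x₁ <+ u₁, full length
      rw [append_nil] at *
      have hne : x₁ ≠ [] := by
        intro hcon
        rw [hcon] at ha1len
        simp at ha1len
      have hdl : x₁.dropLast <+ u₁ := (dropLast_sublist x₁).trans hx1
      have hdlen : x₁.dropLast.length ≤ K := by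
        rw [length_dropLast]
        omega
      have hdl2 := (cu _ hdlen).1 hdl
      have hlast : x₁.getLast hne ∈ u₁ := hx1.subset (getLast_mem hne)
      have hx1eq : x₁ = x₁.dropLast ++ [x₁.getLast hne] :=
        (dropLast_append_getLast hne).symm
      rcases hlu _ hlast with hl | hl
      · -- ends with t
        rw [hx1eq, hl]
        refine join_word ((append_sublist_append_right [t]).2 hdl2) (Nat.zero_le _)
          (nil_sublist _)
      · -- ends with y
        rw [hx1eq, hl]
        have h1 : x₁.dropLast <+ u₂ ++ [t] := hdl2.trans (sublist_append_left _ _)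
        have h2 : [y] <+ m :: v₂ := singleton_sublist.2 (by simp [hyv2])
        have := join_word (y := y) (P := P) h1 (Nat.zero_le P) h2
        simpa [append_assoc] using this
    · -- a₁ = x₁ ++ [t]
      have hx1len : x₁.length ≤ K := by
        simp only [length_append, length_cons, length_nil] at ha1len
        omega
      have := (cu x₁ hx1len).1 hx1
      exact join_word ((append_sublist_append_right [t]).2 this) (Nat.zero_le P)
        (nil_sublist _)

end Variants

section Helpers
variable {β : Type*}

lemma concat_inj {l l' : List β} {x x' : β} (h : l ++ [x] = l' ++ [x']) :
    l = l' ∧ x = x' := by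
  have hlen : l.length = l'.length := by
    have := congrArg List.length h
    simp at this
    omega
  obtain ⟨h1, h2⟩ := append_inj h hlen
  exact ⟨h1, by injection h2⟩

lemma any_transfer {t : β} {u₁ u₂ z : List β} {K : ℕ}
    (cu : SimonCongr K u₁ u₂) (h : z <+ u₁ ++ [t]) (hlen : z.length ≤ K) :
    z <+ u₂ ++ [t] := by
  rcases sublist_append_iff.1 h with ⟨x₁, x₂, rfl, hx1, hx2⟩
  rcases sublist_singleton.1 hx2 with rfl | rfl
  · rw [append_nil] at *
    exact ((cu _ hlen).1 hx1).trans (sublist_append_left _ _)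
  · have hx1len : x₁.length ≤ K := by
      simp at hlen
      omega
    exact (append_sublist_append_right [t]).2 ((cu _ hx1len).1 hx1)

lemma any_transfer_right {m : β} {v₁ v₂ z : List β} {K : ℕ}
    (cv : SimonCongr K v₁ v₂) (h : z <+ m :: v₁) (hlen : z.length ≤ K) :
    z <+ m :: v₂ := by
  rcases sublist_cons_iff.1 h with h' | ⟨r, rfl, hr⟩
  · exact ((cv _ hlen).1 h').cons m
  · have hrlen : r.length ≤ K := by
      simp at hlen
      omega
    exact ((cv _ hrlen).1 hr).cons₂ m

lemma two_sub {x z : β} {P Q : List β} (hx : x ∈ P) (hz : z ∈ Q) :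
    [x, z] <+ P ++ Q := by
  have : [x] ++ [z] <+ P ++ Q := (singleton_sublist.2 hx).append (singleton_sublist.2 hz)
  simpa using this

end Helpers
/-- ternary words with one arch whose `α`-factors both have
two-letter alphabets are `k`-congruent iff their `α`-factors are
`(k−1)`-congruent and their cores are `(k−c)`-congruent, where
`c = ι(α₀) + δ_{y ⪯ re(α₀)} + ι(α₁) + δ_{y ⪯ er(α₁)}`. -/
theorem ternary_both_alpha_binary_congr (k : ℕ) (hk : 1 < k)
    (w w' : List (Fin 3)) (A B A' B' : ℕ → List (Fin 3))
    (hw : IsAlphaBetaFact w 1 A B) (hw' : IsAlphaBetaFact w' 1 A' B')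
    (hiw : iotaUniv w = 1) (hiw' : iotaUniv w' = 1)
    (hcard₀ : (A 0).toFinset.card = 2) (hcard₁ : (A 1).toFinset.card = 2)
    (mw ww : Fin 3)
    (hmw : mw ∉ (A 0).toFinset) (hww : ww ∉ (A 1).toFinset)
    (hm : (B 1).getLast? = some mw) (hrm : (B 1).head? = some ww)
    (hne : mw ≠ ww)
    (y : Fin 3) (hy1 : y ≠ mw) (hy2 : y ≠ ww)
    (ars₀ : List (List (Fin 3))) (r₀ : List (Fin 3))
    (h₀ : IsArchFactOn ((A 0).toFinset) (A 0) ars₀ r₀)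
    (ars₁ : List (List (Fin 3))) (r₁ : List (Fin 3))
    (h₁ : IsArchFactOn ((A 1).toFinset) ((A 1).reverse) ars₁ r₁) :
    SimonCongr k w w' ↔
      (SimonCongr (k - 1) (A 0) (A' 0) ∧ SimonCongr (k - 1) (A 1) (A' 1) ∧
        SimonCongr
          (k - (iotaOn ((A 0).toFinset) (A 0) + (if y ∈ r₀ then 1 else 0)
                + iotaOn ((A 1).toFinset) (A 1) + (if y ∈ r₁ then 1 else 0)))
          (coreOf (B 1)) (coreOf (B' 1))) := by
  classical
  obtain ⟨⟨hwe0, harchs, hrest1⟩, ⟨hwer0, harchsr, hrest0⟩⟩ := hw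
  obtain ⟨⟨hwe0', harchs', hrest1'⟩, ⟨hwer0', harchsr', hrest0'⟩⟩ := hw'
  simp only [List.ofFn_succ, List.ofFn_zero, Fin.val_zero, Fin.val_succ, Nat.zero_add,
    flatten_cons, flatten_nil, append_nil, Nat.sub_zero, Nat.sub_self, Finset.mem_univ,
    forall_const, true_implies, mem_singleton, forall_eq, mem_reverse, not_forall]
    at hwe0 hwer0 harchs harchsr hrest1 hrest0 hwe0' hwer0' harchs' harchsr' hrest1' hrest0'
  have trich : ∀ x : Fin 3, x = mw ∨ x = ww ∨ x = y := fun x => by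
    have hd : ∀ (a b c d : Fin 3), a ≠ b → c ≠ a → c ≠ b → (d = a ∨ d = b ∨ d = c) := by decide
    exact hd mw ww y x hne hy1 hy2
  obtain ⟨K, rfl⟩ : ∃ K, k = K + 1 := ⟨k - 1, by omega⟩
  have hK : 1 ≤ K := by omega
  rw [Nat.add_sub_cancel]
  -- B 1 structure
  rcases hB1c : B 1 with _ | ⟨c, tl⟩
  · rw [hB1c] at hrm; simp at hrm
  rw [hB1c] at hrm hm
  have hc : c = ww := by
    have : some c = some ww := hrm
    exact Option.some.inj this
  rw [hc] at hB1c hm hrm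
  rw [hc, ← hB1c]
  clear hc
  have htlne : tl ≠ [] := by
    intro h
    rw [h] at hm
    simp at hm
    exact hne hm.symm
  have htllast : tl.getLast? = some mw := by
    rw [show (ww :: tl) = [ww] ++ tl from rfl, getLast?_append] at hm
    rcases h6 : tl.getLast? with _ | c'
    · exact absurd rfl (getLast?_eq_none_iff.1 h6 ▸ htlne)
    · rw [h6] at hm
      simpa using hm
  have htleq : tl = tl.dropLast ++ [mw] := by
    conv_lhs => rw [← dropLast_append_getLast htlne]
    have := getLast?_eq_getLast htlne
    rw [htllast] at this
    rw [← Option.some.inj this]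
  have hcore : coreOf (B 1) = tl.dropLast := by simp [coreOf, hB1c]
  have hB1 : B 1 = ww :: (tl.dropLast ++ [mw]) := by
    rw [hB1c]
    conv_lhs => rw [htleq]
  set γ := tl.dropLast with hγdef
  --直接 arch facts
  obtain ⟨hallw, a', x', harcheq, hx'univ, hx'not⟩ := harchs
  have harch2 : (A 0 ++ ww :: γ) ++ [mw] = a' ++ [x'] := by
    rw [← harcheq, hB1]
    simp [append_assoc]
  obtain ⟨ha'eq, hx'mw⟩ := concat_inj harch2
  rw [← hx'mw, ← ha'eq] at hx'not
  have hmwA0 : mw ∉ A 0 := fun h => hx'not (mem_append_left _ h)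
  have hmwγ : mw ∉ γ := fun h => hx'not (mem_append_right _ (by simp [h]))
  obtain ⟨hallwr, a'', x'', harcheqr, hx''univ, hx''not⟩ := harchsr
  have harch2r : ((γ ++ [mw]) ++ A 1).reverse ++ [ww] = a'' ++ [x''] := by
    rw [← harcheqr, hB1, cons_append, reverse_cons]
  obtain ⟨ha''eq, hx''ww⟩ := concat_inj harch2r
  rw [← hx''ww, ← ha''eq] at hx''not
  rw [mem_reverse] at hx''not
  have hwwγ : ww ∉ γ := fun h => hx''not (mem_append_left _ (mem_append_left _ h))
  have hwwA1 : ww ∉ A 1 := fun h => hx''not (mem_append_right _ h)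
  -- gamma unary
  have hγy : ∀ c ∈ γ, c = y := by
    intro c hc
    rcases trich c with rfl | rfl | rfl
    · exact absurd hc hmwγ
    · exact absurd hc hwwγ
    · rfl
  set p := γ.length with hpdef
  have hγrep : γ = replicate p y := eq_replicate_length.2 hγy
  -- alphabets
  have hS0 : (A 0).toFinset = {ww, y} := by
    apply Finset.eq_of_subset_of_card_le
    · intro cc hcc
      rcases trich cc with rfl | rfl | rfl
      · exact absurd hcc hmw
      · simp
      · simp
    · rw [hcard₀]
      refine le_trans (Finset.card_insert_le _ _) ?_
      simp
  have hS1 : (A 1).toFinset = {mw, y} := by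
    apply Finset.eq_of_subset_of_card_le
    · intro cc hcc
      rcases trich cc with rfl | rfl | rfl
      · simp
      · exact absurd hcc hww
      · simp
    · rw [hcard₁]
      refine le_trans (Finset.card_insert_le _ _) ?_
      simp
  have hwwu : ww ∈ A 0 := mem_toFinset.1 (by rw [hS0]; simp)
  have hyu : y ∈ A 0 := mem_toFinset.1 (by rw [hS0]; simp)
  have hmwv : mw ∈ A 1 := mem_toFinset.1 (by rw [hS1]; simp)
  have hyv : y ∈ A 1 := mem_toFinset.1 (by rw [hS1]; simp)
  have hluA : ∀ cc ∈ A 0, cc = ww ∨ cc = y := by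
    intro cc hcc
    rcases trich cc with rfl | rfl | rfl
    · exact absurd hcc hmwA0
    · exact Or.inl rfl
    · exact Or.inr rfl
  have hlvA : ∀ cc ∈ A 1, cc = mw ∨ cc = y := by
    intro cc hcc
    rcases trich cc with rfl | rfl | rfl
    · exact Or.inl rfl
    · exact absurd hcc hwwA1
    · exact Or.inr rfl
  -- constructions
  obtain ⟨hn0, hiota0, L2u, φ, hφlen, hφS, hφsub, hφnot⟩ :=
    constr ww y (Ne.symm hy2) (A 0) ((A 0).toFinset) ars₀ r₀ h₀
      (fun cc hcc => by rw [hS0] at hcc; simpa using hcc)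
      (by rw [hS0]; simp) (by rw [hS0]; simp) hwwu hyu (fun cc hcc => mem_toFinset.2 hcc)
  obtain ⟨hn1, hiota1r, L2vr, φv, hφvlen, hφvS, hφvsub, hφvnot⟩ :=
    constr mw y (Ne.symm hy1) ((A 1).reverse) ((A 1).toFinset) ars₁ r₁ h₁
      (fun cc hcc => by rw [hS1] at hcc; simpa using hcc)
      (by rw [hS1]; simp) (by rw [hS1]; simp) (by simpa using hmwv) (by simpa using hyv)
      (fun cc hcc => mem_toFinset.2 (mem_reverse.1 hcc))
  set eu := ars₀.length + (if y ∈ r₀ then 1 else 0) with heudef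
  set ev := ars₁.length + (if y ∈ r₁ then 1 else 0) with hevdef
  have heu1 : 1 ≤ eu := by omega
  have hev1 : 1 ≤ ev := by omega
  have hiota1 : iotaOn (A 1).toFinset (A 1) = ars₁.length := by
    rw [← iotaOn_reverse]
    exact hiota1r
  have L2v : ∀ bb, bb <+ mw :: A 1 → replicate (ev - bb.length) y ++ bb <+ mw :: A 1 := by
    intro bb hbb
    have h1 : bb.reverse <+ (A 1).reverse ++ [mw] := by
      have := reverse_sublist.2 hbb
      rwa [reverse_cons] at this
    have h2 := L2vr bb.reverse h1
    rw [length_reverse] at h2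
    have h3 : (replicate (ev - bb.length) y ++ bb).reverse <+ (mw :: A 1).reverse := by
      rw [reverse_append, reverse_replicate, reverse_cons]
      exact h2
    exact reverse_sublist.1 h3
  set ψ := φv.reverse with hψdef
  have hψlen : ψ.length = ev := by rw [hψdef, length_reverse, hφvlen]
  have hψS : ∀ cc ∈ ψ, cc = mw ∨ cc = y := fun cc hcc => hφvS cc (by
    rw [hψdef] at hcc; exact mem_reverse.1 hcc)
  have hψsub : ψ <+ mw :: A 1 := by
    apply reverse_sublist.1
    rw [hψdef, reverse_reverse, reverse_cons]
    exact hφvsub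
  have hψnot : ¬ (y :: ψ <+ mw :: A 1) := by
    intro hcon
    apply hφvnot
    have h5 := reverse_sublist.2 hcon
    rw [reverse_cons, reverse_cons, hψdef, reverse_reverse] at h5
    exact h5
  -- normal form of w
  have hwn : w = (A 0 ++ [ww]) ++ replicate p y ++ (mw :: A 1) := by
    rw [hwe0, hB1, hγrep]
    simp [append_assoc]
  -- rewrite goal
  rw [hiota0, hiota1, hcore,
    show ars₀.length + (if y ∈ r₀ then 1 else 0) + ars₁.length + (if y ∈ r₁ then 1 else 0)
      = eu + ev from by omega, hγrep]
  -- common facts about w'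
  have hB'ne : B' 1 ≠ [] := by
    intro hcon
    obtain ⟨xx, hxx⟩ := hrest1'
    apply hxx
    have h5 := harchsr'.1 xx (Finset.mem_univ xx)
    rw [hcon] at h5
    simpa using h5
  rcases hB'c : B' 1 with _ | ⟨t', tl'⟩
  · exact absurd hB'c hB'ne
  rw [← hB'c]
  -- helper facts about w
  have hwwQ : ww ∉ replicate p y ++ (mw :: A 1) := by
    intro hcon
    rcases mem_append.1 hcon with h5 | h5
    · exact hy2 (eq_of_mem_replicate h5).symm
    · rcases mem_cons.1 h5 with h6 | h6
      · exact hne h6.symm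
      · exact hwwA1 h6
  have hmwP : mw ∉ A 0 ++ [ww] := by
    intro hcon
    rcases mem_append.1 hcon with h5 | h5
    · exact hmwA0 h5
    · exact hne (mem_singleton.1 h5)
  have hwwV : ww ∉ mw :: A 1 := by
    intro hcon
    rcases mem_cons.1 hcon with h6 | h6
    · exact hne h6.symm
    · exact hwwA1 h6
  have hprew : ∀ s : List (Fin 3), s <+ A 0 ++ [ww] → s <+ w := by
    intro s hs
    rw [hwn, append_assoc]
    exact hs.trans (sublist_append_left _ _)
  have hsufw : ∀ s : List (Fin 3), s <+ mw :: A 1 → s <+ w := by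
    intro s hs
    rw [hwn]
    exact hs.trans (sublist_append_right _ _)
  have hsub_uw : ∀ {x z : Fin 3}, x ∈ A 0 ++ [ww] → z ∈ mw :: A 1 → [x,z] <+ w := by
    intro x z hx hz
    rw [hwn, append_assoc]
    exact two_sub hx (mem_append_right _ hz)
  have honly : ∀ x z : Fin 3, ¬ ([x,z] <+ w) → x = mw ∧ z = ww := by
    intro x z hxz
    rcases trich x with rfl | rfl | rfl <;> rcases trich z with rfl | rfl | rfl
    · exact absurd (hsufw _ (cons_sublist_cons.2 (singleton_sublist.2 hmwv))) hxz
    · exact ⟨rfl, rfl⟩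
    · exact absurd (hsufw _ (cons_sublist_cons.2 (singleton_sublist.2 hyv))) hxz
    · exact absurd (hsub_uw (mem_append_left _ hwwu) (by simp)) hxz
    · exact absurd (hprew _ (two_sub hwwu (by simp))) hxz
    · exact absurd (hsub_uw (mem_append_left _ hwwu) (by simp [hyv])) hxz
    · exact absurd (hsub_uw (mem_append_left _ hyu) (by simp)) hxz
    · exact absurd (hprew _ (two_sub hyu (by simp))) hxz
    · exact absurd (hsub_uw (mem_append_left _ hyu) (by simp [hyv])) hxz
  have hextract : tl' ≠ [] → ∃ m' γ', tl' = γ' ++ [m'] ∧ coreOf (B' 1) = γ' ∧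
      m' ∉ A' 0 ++ t' :: γ' ∧ t' ∉ (γ' ++ [m']) ++ A' 1 := by
    intro htl'ne
    have htl'eq : tl' = tl'.dropLast ++ [tl'.getLast htl'ne] :=
      (dropLast_append_getLast htl'ne).symm
    refine ⟨tl'.getLast htl'ne, tl'.dropLast, htl'eq, by simp [coreOf, hB'c], ?_, ?_⟩
    · obtain ⟨-, aa, xx, heq, -, hnot⟩ := harchs'
      have h3 : (A' 0 ++ t' :: tl'.dropLast) ++ [tl'.getLast htl'ne] = aa ++ [xx] := by
        rw [← heq, hB'c]
        conv_rhs => rw [htl'eq]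
        simp [append_assoc]
      obtain ⟨haa, hxx⟩ := concat_inj h3
      rw [← hxx, ← haa] at hnot
      exact hnot
    · obtain ⟨-, aa, xx, heq, -, hnot⟩ := harchsr'
      have h3 : ((tl'.dropLast ++ [tl'.getLast htl'ne]) ++ A' 1).reverse ++ [t']
          = aa ++ [xx] := by
        rw [← heq, hB'c]
        conv_rhs => rw [htl'eq]
        rw [cons_append, reverse_cons]
      obtain ⟨haa, hxx⟩ := concat_inj h3
      rw [← hxx, ← haa, mem_reverse] at hnot
      rw [← htl'eq]
      rwa [← htl'eq] at hnot
  constructor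
  · -- FORWARD
    intro hcong
    -- rule out singleton B'
    have htl'ne : tl' ≠ [] := by
      intro hnil
      subst hnil
      obtain ⟨-, aa, xx, heq, -, hnot⟩ := harchs'
      rw [hB'c] at heq
      obtain ⟨haa, hxx⟩ := concat_inj heq
      rw [← hxx, ← haa] at hnot
      obtain ⟨-, aa2, xx2, heq2, -, hnot2⟩ := harchsr'
      rw [hB'c] at heq2
      have h3 : (A' 1).reverse ++ [t'] = aa2 ++ [xx2] := by
        rw [← heq2]
        simp
      obtain ⟨haa2, hxx2⟩ := concat_inj h3
      rw [← hxx2, ← haa2, mem_reverse] at hnot2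
      -- t' occurs exactly once in w'
      have hdouble : [t', t'] <+ w := by
        rcases trich t' with rfl | rfl | rfl
        · exact hsufw _ (cons_sublist_cons.2 (singleton_sublist.2 hmwv))
        · exact hprew _ (two_sub hwwu (by simp))
        · exact hsub_uw (mem_append_left _ hyu) (by simp [hyv])
      have hdd := (hcong _ (by simp; omega)).1 hdouble
      have hcnt := hdd.count_le t'
      rw [hwe0', hB'c] at hcnt
      simp [count_append, count_cons, count_eq_zero_of_not_mem hnot,
        count_eq_zero_of_not_mem hnot2] at hcnt
    obtain ⟨m', γ', htl'eq, hcore', hm'not, ht'not⟩ := hextract htl'ne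
    have hB'1 : B' 1 = t' :: (γ' ++ [m']) := by rw [hB'c, htl'eq]
    -- identify m' and t'
    have hw'P : w' = (A' 0 ++ t' :: γ') ++ (m' :: A' 1) := by
      rw [hwe0', hB'1]
      simp [append_assoc]
    have hid : m' = mw ∧ t' = ww := by
      apply honly
      intro hcon
      have h5 := (hcong _ (by simp; omega)).1 hcon
      rw [hw'P] at h5
      refine twopin hm'not ?_ h5
      intro hcon2
      rcases mem_cons.1 hcon2 with h6 | h6
      · exact (fun h => hm'not (mem_append_right _ (by simp [h]))) h6.symm
      · exact ht'not (mem_append_right _ h6)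
    obtain ⟨hid1, hid2⟩ := hid
    have hid1' : mw = m' := hid1.symm
    have hid2' : ww = t' := hid2.symm
    subst hid1'
    subst hid2'
    -- structure facts for w'
    have hmwA0' : mw ∉ A' 0 := fun h => hm'not (mem_append_left _ h)
    have hmwγ' : mw ∉ γ' := fun h => hm'not (mem_append_right _ (by simp [h]))
    have hwwγ' : ww ∉ γ' := fun h => ht'not (mem_append_left _ (mem_append_left _ h))
    have hwwA1' : ww ∉ A' 1 := fun h => ht'not (mem_append_right _ h)
    have hγ'y : ∀ cc ∈ γ', cc = y := by
      intro cc hcc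
      rcases trich cc with rfl | rfl | rfl
      · exact absurd hcc hmwγ'
      · exact absurd hcc hwwγ'
      · rfl
    set q := γ'.length with hqdef
    have hγ'rep : γ' = replicate q y := eq_replicate_length.2 hγ'y
    have hwn' : w' = (A' 0 ++ [ww]) ++ replicate q y ++ (mw :: A' 1) := by
      rw [hwe0', hB'1, hγ'rep]
      simp [append_assoc]
    have hwwQ' : ww ∉ replicate q y ++ (mw :: A' 1) := by
      intro hcon
      rcases mem_append.1 hcon with h5 | h5
      · exact hy2 (eq_of_mem_replicate h5).symm
      · rcases mem_cons.1 h5 with h6 | h6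
        · exact hne h6.symm
        · exact hwwA1' h6
    have hmwP' : mw ∉ (A' 0 ++ [ww]) ++ replicate q y := by
      intro hcon
      rcases mem_append.1 hcon with h5 | h5
      · rcases mem_append.1 h5 with h6 | h6
        · exact hmwA0' h6
        · exact hne (mem_singleton.1 h6)
      · exact hy1 (eq_of_mem_replicate h5).symm
    -- the two alpha congruences
    have congr_u : SimonCongr K (A 0) (A' 0) := by
      intro s hsK
      constructor
      · intro hsu
        have h1 : s ++ [ww] <+ w := by
          apply hprew
          exact (append_sublist_append_right [ww]).2 hsu
        have h2 := (hcong _ (by simp; omega)).1 h1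
        rw [hwn', append_assoc] at h2
        exact (append_sublist_append_right [ww]).1 (lastpin hwwQ' h2)
      · intro hsu
        have h1 : s ++ [ww] <+ w' := by
          rw [hwn', append_assoc]
          exact ((append_sublist_append_right [ww]).2 hsu).trans (sublist_append_left _ _)
        have h2 := (hcong _ (by simp; omega)).2 h1
        rw [hwn, append_assoc] at h2
        exact (append_sublist_append_right [ww]).1 (lastpin hwwQ h2)
    have congr_v : SimonCongr K (A 1) (A' 1) := by
      intro s hsK
      constructor
      · intro hsv
        have h1 : mw :: s <+ w := hsufw _ (cons_sublist_cons.2 hsv)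
        have h2 := (hcong _ (by simp; omega)).1 h1
        rw [hwn'] at h2
        exact headpin hmwP' h2
      · intro hsv
        have h1 : mw :: s <+ w' := by
          rw [hwn']
          exact (cons_sublist_cons.2 hsv).trans (sublist_append_right _ _)
        have h2 := (hcong _ (by simp; omega)).2 h1
        rw [hwn] at h2
        have hmwPw : mw ∉ (A 0 ++ [ww]) ++ replicate p y := by
          intro hcon
          rcases mem_append.1 hcon with h5 | h5
          · exact hmwP h5
          · exact hy1 (eq_of_mem_replicate h5).symm
        exact headpin hmwPw h2
    refine ⟨congr_u, congr_v, ?_⟩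
    rw [hcore', hγ'rep]
    -- core congruence
    by_cases hpq : p = q
    · rw [hpq]
      exact fun s _ => Iff.rfl
    · have hboth : K + 1 ≤ p + (eu + ev) ∧ K + 1 ≤ q + (eu + ev) := by
        have hmin : K + 1 ≤ min p q + (eu + ev) := by
          by_contra hcon
          push_neg at hcon
          rcases Nat.lt_or_ge p q with hlt | hge
          · -- p < q
            have hSw' : φ ++ replicate (p+1) y ++ ψ <+ w' := by
              rw [hwn']
              refine join_word ?_ (by omega) ?_
              · exact any_transfer congr_u hφsub (by omega)
              · exact any_transfer_right congr_v hψsub (by omega)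
            have hSw : ¬ (φ ++ replicate (p+1) y ++ ψ <+ w) := by
              rw [hwn]
              exact bigpin (Ne.symm hy1) (Ne.symm hy2) hφS hψS hmwP hwwV hφnot hψnot
            have hlen5 : (φ ++ replicate (p+1) y ++ ψ).length ≤ K + 1 := by
              simp [hφlen, hψlen]
              omega
            exact hSw ((hcong _ hlen5).2 hSw')
          · have hgt : q < p := by omega
            have hSw : φ ++ replicate (q+1) y ++ ψ <+ w := by
              rw [hwn]
              exact join_word hφsub (by omega) hψsub
            have hSw' : ¬ (φ ++ replicate (q+1) y ++ ψ <+ w') := by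
              rw [hwn']
              refine bigpin (Ne.symm hy1) (Ne.symm hy2) hφS hψS ?_ ?_ ?_ ?_
              · intro hcon2
                rcases mem_append.1 hcon2 with h5 | h5
                · exact hmwA0' h5
                · exact hne (mem_singleton.1 h5)
              · intro hcon2
                rcases mem_cons.1 hcon2 with h6 | h6
                · exact hne h6.symm
                · exact hwwA1' h6
              · intro hcon2
                have h5 := ends_ne_sublist hy2 hcon2
                have h6 := (congr_u _ (by simp [hφlen]; omega)).2 h5
                exact hφnot (h6.trans (sublist_append_left _ _))
              · intro hcon2
                have h5 := cons_ne_sublist hcon2 hy1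
                have h6 := (congr_v _ (by simp [hψlen]; omega)).2 h5
                exact hψnot (h6.cons mw)
            have hlen5 : (φ ++ replicate (q+1) y ++ ψ).length ≤ K + 1 := by
              simp [hφlen, hψlen]
              omega
            exact hSw' ((hcong _ hlen5).1 hSw)
        constructor <;> omega
      intro s hslen
      constructor <;> intro h5
      · obtain ⟨n, hn, rfl⟩ := sublist_replicate_iff.1 h5
        apply (replicate_sublist_replicate y).2
        simp at hslen
        omega
      · obtain ⟨n, hn, rfl⟩ := sublist_replicate_iff.1 h5
        apply (replicate_sublist_replicate y).2
        simp at hslen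
        omega
  · -- BACKWARD
    rintro ⟨c0, c1, c2⟩
    have hwwu' : ww ∈ A' 0 :=
      singleton_sublist.1 ((c0 [ww] (by simp; omega)).1 (singleton_sublist.2 hwwu))
    have hyu' : y ∈ A' 0 :=
      singleton_sublist.1 ((c0 [y] (by simp; omega)).1 (singleton_sublist.2 hyu))
    have hmwv' : mw ∈ A' 1 :=
      singleton_sublist.1 ((c1 [mw] (by simp; omega)).1 (singleton_sublist.2 hmwv))
    have hyv' : y ∈ A' 1 :=
      singleton_sublist.1 ((c1 [y] (by simp; omega)).1 (singleton_sublist.2 hyv))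
    have htl'ne : tl' ≠ [] := by
      intro hnil
      subst hnil
      obtain ⟨-, aa, xx, heq, -, hnot⟩ := harchs'
      rw [hB'c] at heq
      obtain ⟨haa, hxx⟩ := concat_inj heq
      rw [← hxx, ← haa] at hnot
      obtain ⟨-, aa2, xx2, heq2, -, hnot2⟩ := harchsr'
      rw [hB'c] at heq2
      have h3 : (A' 1).reverse ++ [t'] = aa2 ++ [xx2] := by
        rw [← heq2]
        simp
      obtain ⟨haa2, hxx2⟩ := concat_inj h3
      rw [← hxx2, ← haa2, mem_reverse] at hnot2
      rcases trich t' with rfl | rfl | rfl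
      · exact hnot2 hmwv'
      · exact hnot hwwu'
      · exact hnot hyu'
    obtain ⟨m', γ', htl'eq, hcore', hm'not, ht'not⟩ := hextract htl'ne
    have hB'1 : B' 1 = t' :: (γ' ++ [m']) := by rw [hB'c, htl'eq]
    have hm'A0 : m' ∉ A' 0 := fun h => hm'not (mem_append_left _ h)
    have ht'A1 : t' ∉ A' 1 := fun h => ht'not (mem_append_right _ h)
    have hid1 : m' = mw := by
      rcases trich m' with rfl | rfl | rfl
      · rfl
      · exact absurd hwwu' hm'A0
      · exact absurd hyu' hm'A0
    have hid2 : t' = ww := by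
      rcases trich t' with rfl | rfl | rfl
      · exact absurd hmwv' ht'A1
      · rfl
      · exact absurd hyv' ht'A1
    have hid1' : mw = m' := hid1.symm
    have hid2' : ww = t' := hid2.symm
    subst hid1'
    subst hid2'
    have hmwγ' : mw ∉ γ' := fun h => hm'not (mem_append_right _ (by simp [h]))
    have hwwγ' : ww ∉ γ' := fun h => ht'not (mem_append_left _ (mem_append_left _ h))
    have hwwA1' : ww ∉ A' 1 := ht'A1
    have hmwA0' : mw ∉ A' 0 := hm'A0
    have hγ'y : ∀ cc ∈ γ', cc = y := by
      intro cc hcc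
      rcases trich cc with rfl | rfl | rfl
      · exact absurd hcc hmwγ'
      · exact absurd hcc hwwγ'
      · rfl
    set q := γ'.length with hqdef
    have hγ'rep : γ' = replicate q y := eq_replicate_length.2 hγ'y
    have hwn' : w' = (A' 0 ++ [ww]) ++ replicate q y ++ (mw :: A' 1) := by
      rw [hwe0', hB'1, hγ'rep]
      simp [append_assoc]
    have hluA' : ∀ cc ∈ A' 0, cc = ww ∨ cc = y := by
      intro cc hcc
      rcases trich cc with rfl | rfl | rfl
      · exact absurd hcc hmwA0'
      · exact Or.inl rfl
      · exact Or.inr rfl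
    have hlvA' : ∀ cc ∈ A' 1, cc = mw ∨ cc = y := by
      intro cc hcc
      rcases trich cc with rfl | rfl | rfl
      · exact Or.inl rfl
      · exact absurd hcc hwwA1'
      · exact Or.inr rfl
    rw [hcore', hγ'rep] at c2
    have hpq : p = q ∨ (K + 1 ≤ p + (eu + ev) ∧ K + 1 ≤ q + (eu + ev)) := by
      by_cases h : p = q
      · exact Or.inl h
      · right
        rcases Nat.lt_or_ge p q with hlt | hge
        · have h1 : K + 1 ≤ p + (eu + ev) := by
            by_contra hcon
            push_neg at hcon
            have h5 := (c2 (replicate (p+1) y) (by simp; omega)).2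
              ((replicate_sublist_replicate y).2 (by omega))
            obtain ⟨n, hn, heqn⟩ := sublist_replicate_iff.1 h5
            have := congrArg List.length heqn
            simp at this
            omega
          exact ⟨h1, by omega⟩
        · have hgt : q < p := by omega
          have h1 : K + 1 ≤ q + (eu + ev) := by
            by_contra hcon
            push_neg at hcon
            have h5 := (c2 (replicate (q+1) y) (by simp; omega)).1
              ((replicate_sublist_replicate y).2 (by omega))
            obtain ⟨n, hn, heqn⟩ := sublist_replicate_iff.1 h5
            have := congrArg List.length heqn
            simp at this
            omega
          exact ⟨by omega, h1⟩
    intro s hs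
    rw [hwn, hwn']
    rcases hpq with hpq | ⟨hp1, hq1⟩
    · rw [hpq]
      constructor
      · intro h5
        exact transfer_eq c0 c1 hluA hlvA hyu' hyv' hs h5
      · intro h5
        exact transfer_eq (simonCongr_symm c0) (simonCongr_symm c1) hluA' hlvA' hyu hyv hs h5
    · constructor
      · intro h5
        exact transfer_ge (Ne.symm hy1) (Ne.symm hy2) c0 c1 hluA hlvA L2u L2v heu1 hev1 hK
          (by omega) hs h5
      · intro h5
        exact transfer_ge_rev (Ne.symm hy1) (Ne.symm hy2) (simonCongr_symm c0)
          (simonCongr_symm c1) hluA' hlvA' L2u L2v (by omega) hs h5
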